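/- For every κ ≥ 1 and E ≥ 0, one has g((κ − 1/2)E + κ − 1) − g(E/2) ≥ ln(2κ − 1). -/

import Mathlib

open Real Filter Topology

noncomputable def g (x : ℝ) : ℝ := (x + 1) * Real.log (x + 1) - x * Real.log x

lemma trap {x : ℝ} (hx : 0 < x) :
    Real.log (x + 1) - Real.log x ≤ (x + 1/2) / (x * (x + 1)) := by
  have hx1 : (0:ℝ) < x + 1 := by linarith
  have ht : (1:ℝ) ≤ (x+1)/x := by rw [le_div_iff₀ hx]; linarith
  have ht0 : (0:ℝ) < (x+1)/x := by positivity
  have hs : Real.log ((x+1)/x) ≤ Real.sinh (Real.log ((x+1)/x)) :=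
    Real.self_le_sinh_iff.mpr (Real.log_nonneg ht)
  rw [Real.sinh_log ht0] at hs
  rw [← Real.log_div hx1.ne' hx.ne']
  refine hs.trans (le_of_eq ?_)
  field_simp
  ring

lemma hasDerivAt_g {x : ℝ} (hx : 0 < x) :
    HasDerivAt g (Real.log (x + 1) - Real.log x) x := by
  have hx1 : (0:ℝ) < x + 1 := by linarith
  have hid : HasDerivAt (fun y : ℝ => y + 1) 1 x := (hasDerivAt_id x).add_const 1
  have h1 := hid.mul (hid.log hx1.ne')
  have h2 := (hasDerivAt_id x).mul ((hasDerivAt_id x).log hx.ne')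
  have h3 := h1.sub h2
  refine h3.congr_deriv ?_
  simp only [id]
  field_simp
  ring

lemma halg0 {y p : ℝ} (hy : 0 < y) (hp : p = y + 1/2) :
    p / (y + 1) - p / y = -((y + 1/2) / (y * (y + 1))) := by
  subst hp
  have h1 : y ≠ 0 := hy.ne'
  have h2 : y + 1 ≠ 0 := by positivity
  field_simp
  ring

lemma keyD {a c : ℝ} (ha : 0 < a) (hc : 1 ≤ c) :
    c * (Real.log (c * a + (c - 1) / 2 + 1) - Real.log (c * a + (c - 1) / 2))
      ≤ Real.log (a + 1) - Real.log a := by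
  set ψ : ℝ → ℝ := fun t =>
    t * (Real.log (t * (a + 1/2) - 1/2 + 1) - Real.log (t * (a + 1/2) - 1/2)) with hψ
  have hy : ∀ t : ℝ, 1 ≤ t → 0 < t * (a + 1/2) - 1/2 := by
    intro t ht; nlinarith
  have hder : ∀ t : ℝ, 1 ≤ t → HasDerivAt ψ
      ((Real.log (t * (a + 1/2) - 1/2 + 1) - Real.log (t * (a + 1/2) - 1/2))
        + t * ((a + 1/2) / (t * (a + 1/2) - 1/2 + 1) - (a + 1/2) / (t * (a + 1/2) - 1/2))) t := by
    intro t ht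
    have hyt := hy t ht
    have hyt1 : (0:ℝ) < t * (a + 1/2) - 1/2 + 1 := by linarith
    have hlin : HasDerivAt (fun t : ℝ => t * (a + 1/2) - 1/2) (a + 1/2) t := by
      simpa using ((hasDerivAt_id t).mul_const (a + 1/2)).sub_const (1/2)
    have hl1 : HasDerivAt (fun t : ℝ => Real.log (t * (a + 1/2) - 1/2 + 1))
        ((a + 1/2) / (t * (a + 1/2) - 1/2 + 1)) t := by
      simpa [div_eq_inv_mul, mul_comm] using (hlin.add_const 1).log hyt1.ne'
    have hl2 : HasDerivAt (fun t : ℝ => Real.log (t * (a + 1/2) - 1/2))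
        ((a + 1/2) / (t * (a + 1/2) - 1/2)) t := by
      simpa [div_eq_inv_mul, mul_comm] using hlin.log hyt.ne'
    rw [hψ]
    refine ((hasDerivAt_id t).mul (hl1.sub hl2)).congr_deriv ?_
    simp only [id_eq, Pi.sub_apply]
    ring
  have hanti : AntitoneOn ψ (Set.Ici 1) := by
    refine antitoneOn_of_deriv_nonpos (convex_Ici 1) ?_ ?_ ?_
    · intro t ht
      exact (hder t ht).continuousAt.continuousWithinAt
    · intro t ht
      rw [interior_Ici] at ht
      exact (hder t (le_of_lt ht)).differentiableAt.differentiableWithinAt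
    · intro t ht
      rw [interior_Ici] at ht
      rw [(hder t ht.le).deriv]
      have hyt := hy t ht.le
      have hyt1 : (0:ℝ) < t * (a + 1/2) - 1/2 + 1 := by linarith
      have hne := hyt.ne'
      have hne1 := hyt1.ne'
      have htrap := trap hyt
      have step1 : t * ((a + 1/2) / (t * (a + 1/2) - 1/2 + 1) - (a + 1/2) / (t * (a + 1/2) - 1/2))
          = (t * (a + 1/2)) / ((t * (a + 1/2) - 1/2) + 1) - (t * (a + 1/2)) / (t * (a + 1/2) - 1/2) := by
        ring
      have step2 := halg0 hyt (show t * (a + 1/2) = (t * (a + 1/2) - 1/2) + 1/2 by ring)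
      rw [step1, step2]
      linarith [htrap]
  have h1 : ψ c ≤ ψ 1 := hanti (Set.mem_Ici.mpr le_rfl) (Set.mem_Ici.mpr hc) hc
  have e1 : ψ 1 = Real.log (a + 1) - Real.log a := by
    norm_num [hψ]
  have e2 : ψ c = c * (Real.log (c * a + (c - 1) / 2 + 1) - Real.log (c * a + (c - 1) / 2)) := by
    have h : c * (a + 1/2) - 1/2 = c * a + (c - 1) / 2 := by ring
    rw [hψ]; simp only [h]
  rw [e1, e2] at h1
  exact h1

lemma g_continuous : Continuous g := by
  unfold g
  exact (Real.continuous_mul_log.comp (continuous_id.add continuous_const)).sub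
    Real.continuous_mul_log


lemma H_anti {c : ℝ} (hc : 1 ≤ c) :
    AntitoneOn (fun a => g (c * a + (c - 1) / 2) - g a) (Set.Ici 0) := by
  have hc0 : (0:ℝ) < c := by linarith
  have hder : ∀ a : ℝ, 0 < a → HasDerivAt (fun a => g (c * a + (c - 1) / 2) - g a)
      ((Real.log (c * a + (c - 1) / 2 + 1) - Real.log (c * a + (c - 1) / 2)) * c
        - (Real.log (a + 1) - Real.log a)) a := by
    intro a ha
    have hy : 0 < c * a + (c - 1) / 2 := by nlinarith
    have hinner : HasDerivAt (fun a : ℝ => c * a + (c - 1) / 2) c a := by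
      simpa using ((hasDerivAt_id a).const_mul c).add_const ((c - 1) / 2)
    have houter := (hasDerivAt_g hy).comp a hinner
    exact houter.sub (hasDerivAt_g ha)
  refine antitoneOn_of_deriv_nonpos (convex_Ici 0) ?_ ?_ ?_
  · exact ((g_continuous.comp (by continuity)).sub g_continuous).continuousOn
  · intro a ha
    rw [interior_Ici] at ha
    exact (hder a ha).differentiableAt.differentiableWithinAt
  · intro a ha
    rw [interior_Ici] at ha
    rw [(hder a ha).deriv]
    have := keyD ha hc
    linarith [this, mul_comm c (Real.log (c * a + (c - 1) / 2 + 1) - Real.log (c * a + (c - 1) / 2))]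

lemma g_eq {x : ℝ} (hx : 0 < x) :
    g x = Real.log x + (x * Real.log (1 + 1/x) + Real.log (1 + 1/x)) := by
  unfold g
  rw [show (1:ℝ) + 1/x = (x+1)/x by field_simp, Real.log_div (by linarith) hx.ne']
  ring

lemma H_tendsto {c : ℝ} (hc : 1 ≤ c) :
    Tendsto (fun a => g (c * a + (c - 1) / 2) - g a) atTop (𝓝 (Real.log c)) := by
  have hc0 : (0:ℝ) < c := by linarith
  have hy_top : Tendsto (fun a : ℝ => c * a + (c - 1) / 2) atTop atTop :=
    tendsto_atTop_add_const_right _ _ (tendsto_id.const_mul_atTop hc0)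
  have h2 : Tendsto (fun x : ℝ => Real.log (1 + 1/x)) atTop (𝓝 0) := by
    have hi : Tendsto (fun x : ℝ => 1 + 1/x) atTop (𝓝 1) := by
      have := tendsto_inv_atTop_zero (𝕜 := ℝ)
      simpa [one_div] using tendsto_const_nhds.add this
    have := ((Real.continuousAt_log one_ne_zero).tendsto).comp hi
    simpa [Function.comp_def] using this
  have hF : Tendsto (fun x : ℝ => x * Real.log (1 + 1/x) + Real.log (1 + 1/x)) atTop (𝓝 1) := by
    have h1 := Real.tendsto_mul_log_one_add_div_atTop 1
    simpa using h1.add h2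
  have hquot : Tendsto (fun a : ℝ => Real.log (c + (c-1)/2/a)) atTop (𝓝 (Real.log c)) := by
    have hi : Tendsto (fun a : ℝ => c + (c-1)/2/a) atTop (𝓝 c) := by
      simpa using tendsto_const_nhds.add (Tendsto.div_atTop (tendsto_const_nhds (x := (c-1)/2)) tendsto_id)
    exact ((Real.continuousAt_log hc0.ne').tendsto).comp hi
  have T := hquot.add ((hF.comp hy_top).sub hF)
  rw [show Real.log c + (1 - 1) = Real.log c by ring] at T
  refine T.congr' ?_
  filter_upwards [eventually_gt_atTop (0:ℝ)] with a ha
  have hy : 0 < c * a + (c - 1) / 2 := by nlinarith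
  have e1 : Real.log (c + (c-1)/2/a) = Real.log (c * a + (c - 1) / 2) - Real.log a := by
    rw [← Real.log_div hy.ne' ha.ne']
    congr 1
    field_simp
  simp only [Function.comp]
  rw [g_eq hy, g_eq ha, e1]
  ring

/-- for `κ ≥ 1` and `E ≥ 0`,
`g((κ−1/2)E + κ−1) − g(E/2) ≥ ln(2κ−1)`. -/
theorem upper_ge_lower (κ E : ℝ) (hκ : 1 ≤ κ) (hE : 0 ≤ E) :
    Real.log (2 * κ - 1) ≤ g ((κ - 1 / 2) * E + κ - 1) - g (E / 2) := by
  set c : ℝ := 2 * κ - 1 with hcdef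
  have hc : 1 ≤ c := by simp [hcdef]; linarith
  have harg : (κ - 1 / 2) * E + κ - 1 = c * (E / 2) + (c - 1) / 2 := by
    rw [hcdef]; ring
  have ha : (0:ℝ) ≤ E / 2 := by linarith
  have hev : ∀ᶠ a in atTop, g (c * a + (c - 1) / 2) - g a
      ≤ g (c * (E / 2) + (c - 1) / 2) - g (E / 2) := by
    filter_upwards [eventually_ge_atTop (E / 2)] with a haE
    exact H_anti hc (Set.mem_Ici.mpr ha) (Set.mem_Ici.mpr (le_trans ha haE)) haE
  have := le_of_tendsto (H_tendsto hc) hev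
  rw [harg]
  exact this
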